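/- Under the assumptions of the previous statement (0 ≤ c′‖δ‖₂² ≤ (η/2)‖δ‖₁ + η(‖Φ‖₁ − ‖Φ+δ‖₁) with Φ supported on I, |I| = s, c′ > 0, η > 0), one has ‖δ‖₂ ≤ 8√s · η / c′ and hence ‖δ‖₁ ≤ 32 s η / c′. -/

import Mathlib

theorem lasso_error_rate (d s : ℕ) (c' eta : ℝ) (hc' : 0 < c') (heta : 0 < eta)
    (Phi delta : Fin d → ℝ) (I : Finset (Fin d)) (hPhi : ∀ i ∉ I, Phi i = 0)
    (hI : I.card = s)
    (h1 : 0 ≤ c' * ∑ i, (delta i)^2)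
    (h2 : c' * ∑ i, (delta i)^2 ≤
      (eta / 2) * ∑ i, |delta i| +
        eta * ((∑ i, |Phi i|) - ∑ i, |Phi i + delta i|)) :
    Real.sqrt (∑ i, (delta i)^2) ≤ 8 * Real.sqrt s * eta / c' ∧
      ∑ i, |delta i| ≤ 32 * s * eta / c' := by
  set S2 : ℝ := ∑ i, (delta i)^2 with hS2
  set SI : ℝ := ∑ i ∈ I, |delta i| with hSI
  set Sc : ℝ := ∑ i ∈ Iᶜ, |delta i| with hSc
  have hsplit1 : ∑ i, |delta i| = SI + Sc := by
    rw [hSI, hSc, ← Finset.sum_add_sum_compl I]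
  -- |Phi| sum minus |Phi+delta| sum bounded by SI - Sc
  have hA : (∑ i, |Phi i|) - (∑ i, |Phi i + delta i|) ≤ SI - Sc := by
    have e1 : (∑ i, |Phi i|) = ∑ i ∈ I, |Phi i| := by
      rw [← Finset.sum_add_sum_compl I]
      have : ∑ i ∈ Iᶜ, |Phi i| = 0 := by
        apply Finset.sum_eq_zero
        intro i hi
        rw [hPhi i (Finset.mem_compl.mp hi), abs_zero]
      linarith
    have e2 : (∑ i, |Phi i + delta i|) =
        (∑ i ∈ I, |Phi i + delta i|) + Sc := by
      rw [← Finset.sum_add_sum_compl I]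
      congr 1
      apply Finset.sum_congr rfl
      intro i hi
      rw [hPhi i (Finset.mem_compl.mp hi), zero_add]
    rw [e1, e2]
    have : ∑ i ∈ I, |Phi i| - ∑ i ∈ I, |Phi i + delta i| ≤ SI := by
      rw [hSI, ← Finset.sum_sub_distrib]
      apply Finset.sum_le_sum
      intro i _
      have := abs_sub_abs_le_abs_sub (Phi i) (Phi i + delta i)
      simpa using this
    linarith
  have hS2nn : 0 ≤ S2 := Finset.sum_nonneg fun i _ => sq_nonneg _
  have hSInn : 0 ≤ SI := Finset.sum_nonneg fun i _ => abs_nonneg _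
  have hScnn : 0 ≤ Sc := Finset.sum_nonneg fun i _ => abs_nonneg _
  set x : ℝ := Real.sqrt S2 with hx
  have hxnn : 0 ≤ x := Real.sqrt_nonneg _
  have hxsq : x * x = S2 := Real.mul_self_sqrt hS2nn
  set rs : ℝ := Real.sqrt s with hrs
  have hrsnn : 0 ≤ rs := Real.sqrt_nonneg _
  have hrssq : rs * rs = (s : ℝ) := Real.mul_self_sqrt (Nat.cast_nonneg s)
  -- Cauchy-Schwarz: SI ≤ √s * √S2
  have hCS : SI ≤ rs * x := by
    have h := sq_sum_le_card_mul_sum_sq (s := I) (f := fun i => |delta i|)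
    have hsub : ∑ i ∈ I, |delta i| ^ 2 ≤ S2 := by
      calc ∑ i ∈ I, |delta i| ^ 2 ≤ ∑ i, |delta i| ^ 2 :=
            Finset.sum_le_sum_of_subset_of_nonneg (Finset.subset_univ I)
              (fun i _ _ => sq_nonneg _)
        _ = S2 := by rw [hS2]; exact Finset.sum_congr rfl fun i _ => sq_abs _
    have hsq : SI ^ 2 ≤ (s : ℝ) * S2 := by
      calc SI ^ 2 ≤ (I.card : ℝ) * ∑ i ∈ I, |delta i| ^ 2 := h
        _ ≤ (s : ℝ) * S2 := by
            rw [hI]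
            exact mul_le_mul_of_nonneg_left hsub (Nat.cast_nonneg s)
    calc SI = Real.sqrt (SI ^ 2) := (Real.sqrt_sq hSInn).symm
      _ ≤ Real.sqrt ((s : ℝ) * S2) := Real.sqrt_le_sqrt hsq
      _ = rs * x := Real.sqrt_mul (Nat.cast_nonneg s) S2
  -- main inequality
  have hmain : c' * S2 ≤ (3/2) * eta * SI - (eta/2) * Sc := by
    have hAe := mul_le_mul_of_nonneg_left hA heta.le
    rw [hsplit1] at h2
    nlinarith
  have hcone : Sc ≤ 3 * SI := by nlinarith
  have hl2 : x ≤ 8 * rs * eta / c' := by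
    rw [le_div_iff₀ hc']
    rcases eq_or_lt_of_le hxnn with h0 | h0
    · nlinarith
    · have hb : c' * S2 ≤ (3/2) * eta * (rs * x) := by
        nlinarith
      rw [← hxsq] at hb
      have hb' : (c' * x) * x ≤ ((3/2) * eta * rs) * x := by linear_combination hb
      have : c' * x ≤ (3/2) * eta * rs := le_of_mul_le_mul_right hb' h0
      nlinarith
  constructor
  · exact hl2
  · rw [hsplit1, le_div_iff₀ hc']
    have hxc : x * c' ≤ 8 * rs * eta := (le_div_iff₀ hc').mp hl2
    calc (SI + Sc) * c' ≤ (4 * SI) * c' :=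
          mul_le_mul_of_nonneg_right (by linarith) hc'.le
      _ ≤ (4 * (rs * x)) * c' :=
          mul_le_mul_of_nonneg_right (by linarith) hc'.le
      _ = 4 * rs * (x * c') := by ring
      _ ≤ 4 * rs * (8 * rs * eta) :=
          mul_le_mul_of_nonneg_left hxc (by positivity)
      _ = 32 * (rs * rs) * eta := by ring
      _ = 32 * s * eta := by rw [hrssq]
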